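/- Let J be the group defined by the presentation ⟨g, x | g⁴, x⁴ g x⁻³ g²⟩ (the quotient of the free group on two generators g, x by the normal closure of the relators g⁴ and x⁴ g x⁻³ g²). Then J is finite of order 4, and the images of g and x in J are equal (so J is cyclic of order four, generated by the image of x). -/

import Mathlib

/-- The relators `g⁴` and `x⁴ g x⁻³ g²` in the free group on two generators
`g = of 0`, `x = of 1`. -/
def stmt6Rels : Set (FreeGroup (Fin 2)) :=
  {FreeGroup.of 0 ^ 4,
   FreeGroup.of 1 ^ 4 * FreeGroup.of 0 * ((FreeGroup.of 1)⁻¹) ^ 3 * FreeGroup.of 0 ^ 2}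

set_option maxHeartbeats 4000000
set_option maxRecDepth 100000 in

theorem keyLemma {G : Type*} [Group G] (g x : G) (h1 : g ^ 4 = 1)
    (h2 : x ^ 4 * g * x⁻¹ ^ 3 * g ^ 2 = 1) : x ^ 4 = 1 ∧ g = x := by
  have h3 : x * g * x * g = 1 := by
    have e : x * g * x * g =
      (x⁻¹ * x⁻¹ * x⁻¹) * (x ^ 4 * g * x⁻¹ ^ 3 * g ^ 2) * (x⁻¹ * x⁻¹ * x⁻¹)⁻¹ *
      (x⁻¹ * x⁻¹ * x⁻¹) * (g ^ 4)⁻¹ * (x⁻¹ * x⁻¹ * x⁻¹)⁻¹ *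
      (g⁻¹ * x⁻¹ * x⁻¹ * x⁻¹ * x⁻¹) * (x ^ 4 * g * x⁻¹ ^ 3 * g ^ 2) * (g⁻¹ * x⁻¹ * x⁻¹ * x⁻¹ * x⁻¹)⁻¹ := by group
    rw [h1, h2] at e
    rw [e]; group
  have hx4 : x ^ 4 = 1 := by
    rw [← inv_eq_one]
    have e : (x ^ 4)⁻¹ =
      (x * g) * (x ^ 4 * g * x⁻¹ ^ 3 * g ^ 2) * (x * g)⁻¹ *
      (x * x * g) * (x ^ 4 * g * x⁻¹ ^ 3 * g ^ 2) * (x * x * g)⁻¹ *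
      (x * x * x * g * x * x * x * x) * (g ^ 4)⁻¹ * (x * x * x * g * x * x * x * x)⁻¹ *
      (x * x * x * g) * (x ^ 4 * g * x⁻¹ ^ 3 * g ^ 2) * (x * x * x * g)⁻¹ *
      (x * x * x * x * g) * (x ^ 4 * g * x⁻¹ ^ 3 * g ^ 2) * (x * x * x * x * g)⁻¹ *
      (x * x * x * x) * (x * g * x * g)⁻¹ * (x * x * x * x)⁻¹ *
      (x * x * x * x * x * g * x * x * x * x) * (x * g * x * g)⁻¹ * (x * x * x * x * x * g * x * x * x * x)⁻¹ *
      (x * x * x * x * x * g * x * x * x * x * x * g * x⁻¹ * x⁻¹ * x⁻¹) * (x * g * x * g)⁻¹ * (x * x * x * x * x * g * x * x * x * x * x * g * x⁻¹ * x⁻¹ * x⁻¹)⁻¹ *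
      (x * x * x * x * x * g * x * x * x * x * x * g * x * g * g * g * x⁻¹ * x⁻¹ * x⁻¹ * x⁻¹) * (x * g * x * g)⁻¹ * (x * x * x * x * x * g * x * x * x * x * x * g * x * g * g * g * x⁻¹ * x⁻¹ * x⁻¹ * x⁻¹)⁻¹ *
      (x * x * x * x * x * g * x * x * x * x * x * g * x * g * g * x⁻¹ * x⁻¹ * x⁻¹ * x⁻¹) * (x * g * x * g)⁻¹ * (x * x * x * x * x * g * x * x * x * x * x * g * x * g * g * x⁻¹ * x⁻¹ * x⁻¹ * x⁻¹)⁻¹ *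
      (x * x * x * x * x * g * x * x * x * x * x * g * x * g * x⁻¹ * x⁻¹ * x⁻¹ * x⁻¹) * (x * g * x * g)⁻¹ * (x * x * x * x * x * g * x * x * x * x * x * g * x * g * x⁻¹ * x⁻¹ * x⁻¹ * x⁻¹)⁻¹ *
      (x * x * x * x * x * g * x * x * x * x) * (x * g * x * g) * (x * x * x * x * x * g * x * x * x * x)⁻¹ *
      (x * x * x * x) * (x * g * x * g) * (x * x * x * x)⁻¹ := by group
    rw [h1, h2, h3] at e
    rw [e]; group
  refine ⟨hx4, ?_⟩
  have hxg : x ^ 3 * g = 1 := by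
    have e : x ^ 3 * g =
      (g) * (x ^ 4 * g * x⁻¹ ^ 3 * g ^ 2) * (g)⁻¹ *
      (x * g * x * x * x * x * x) * (g ^ 4) * (x * g * x * x * x * x * x)⁻¹ *
      (x * g * x * x * g * g) * (x ^ 4 * g * x⁻¹ ^ 3 * g ^ 2)⁻¹ * (x * g * x * x * g * g)⁻¹ *
      (x * g * x * x * g * x⁻¹ * g) * (x ^ 4 * g * x⁻¹ ^ 3 * g ^ 2)⁻¹ * (x * g * x * x * g * x⁻¹ * g)⁻¹ *
      (x * g * x * x * g * x⁻¹ * x⁻¹ * g) * (x ^ 4 * g * x⁻¹ ^ 3 * g ^ 2)⁻¹ * (x * g * x * x * g * x⁻¹ * x⁻¹ * g)⁻¹ *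
      (x * g * x * x * g * x⁻¹ * x⁻¹ * x⁻¹) * (x ^ 4 * g * x⁻¹ ^ 3 * g ^ 2)⁻¹ * (x * g * x * x * g * x⁻¹ * x⁻¹ * x⁻¹)⁻¹ *
      (x * g * x * x * g * x * g * x⁻¹ * x⁻¹ * x⁻¹ * g * g * x * g * x * x * x * x * g * x⁻¹ * x⁻¹ * x⁻¹ * g * x * g * x * x * x * x * g * x⁻¹ * x⁻¹ * x⁻¹ * g * x * g * x * x * x * x) * (x * g * x * g)⁻¹ * (x * g * x * x * g * x * g * x⁻¹ * x⁻¹ * x⁻¹ * g * g * x * g * x * x * x * x * g * x⁻¹ * x⁻¹ * x⁻¹ * g * x * g * x * x * x * x * g * x⁻¹ * x⁻¹ * x⁻¹ * g * x * g * x * x * x * x)⁻¹ *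
      (x * g * x * x * g * x * g * x⁻¹ * x⁻¹ * x⁻¹ * g * g * x * g * x * x * x * x * g * x⁻¹ * x⁻¹ * x⁻¹ * g * x * g * x * x * x * x * g * x⁻¹ * x⁻¹ * x⁻¹ * g * x * g * x * x * x * x * x * g * x) * (x * g * x * g)⁻¹ * (x * g * x * x * g * x * g * x⁻¹ * x⁻¹ * x⁻¹ * g * g * x * g * x * x * x * x * g * x⁻¹ * x⁻¹ * x⁻¹ * g * x * g * x * x * x * x * g * x⁻¹ * x⁻¹ * x⁻¹ * g * x * g * x * x * x * x * x * g * x)⁻¹ *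
      (x * g * x * x * g * x * g * x⁻¹ * x⁻¹ * x⁻¹ * g * g * x * g * x * x * x * x * g * x⁻¹ * x⁻¹ * x⁻¹ * g * x * g * x * x * x * x * g * x⁻¹ * x⁻¹ * x⁻¹ * g * x * g * x * x * x * x * x * g * x * x * g * x) * (x * g * x * g)⁻¹ * (x * g * x * x * g * x * g * x⁻¹ * x⁻¹ * x⁻¹ * g * g * x * g * x * x * x * x * g * x⁻¹ * x⁻¹ * x⁻¹ * g * x * g * x * x * x * x * g * x⁻¹ * x⁻¹ * x⁻¹ * g * x * g * x * x * x * x * x * g * x * x * g * x)⁻¹ *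
      (x * g * x * x * g * x * g * x⁻¹ * x⁻¹ * x⁻¹ * g * g * x * g * x * x * x * x * g * x⁻¹ * x⁻¹ * x⁻¹ * g * x * g * x * x * x * x * g * x⁻¹ * x⁻¹ * x⁻¹ * g * x * g * x * x * x * x * x * g * x * x * g * x * x * g * x⁻¹ * x⁻¹ * x⁻¹ * x⁻¹) * (x * g * x * g)⁻¹ * (x * g * x * x * g * x * g * x⁻¹ * x⁻¹ * x⁻¹ * g * g * x * g * x * x * x * x * g * x⁻¹ * x⁻¹ * x⁻¹ * g * x * g * x * x * x * x * g * x⁻¹ * x⁻¹ * x⁻¹ * g * x * g * x * x * x * x * x * g * x * x * g * x * x * g * x⁻¹ * x⁻¹ * x⁻¹ * x⁻¹)⁻¹ *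
      (x * g * x * x * g * x * g * x⁻¹ * x⁻¹ * x⁻¹ * g * g * x * g * x * x * x * x * g * x⁻¹ * x⁻¹ * x⁻¹ * g * x * g * x * x * x * x * g * x⁻¹ * x⁻¹ * x⁻¹ * g * x * g * x * x * x * x * x * g * x * x * g * x⁻¹ * x⁻¹) * (x * g * x * g)⁻¹ * (x * g * x * x * g * x * g * x⁻¹ * x⁻¹ * x⁻¹ * g * g * x * g * x * x * x * x * g * x⁻¹ * x⁻¹ * x⁻¹ * g * x * g * x * x * x * x * g * x⁻¹ * x⁻¹ * x⁻¹ * g * x * g * x * x * x * x * x * g * x * x * g * x⁻¹ * x⁻¹)⁻¹ *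
      (x * g * x) * (x * g * x * g) * (x * g * x)⁻¹ *
      (x * g * x⁻¹ * x⁻¹ * g * x⁻¹) * (x * g * x * g) * (x * g * x⁻¹ * x⁻¹ * g * x⁻¹)⁻¹ *
      (x * g * x⁻¹ * x⁻¹ * g * x * x * x * g * x⁻¹ * x⁻¹ * x⁻¹ * x⁻¹) * (x * g * x * g) * (x * g * x⁻¹ * x⁻¹ * g * x * x * x * g * x⁻¹ * x⁻¹ * x⁻¹ * x⁻¹)⁻¹ *
      (x * g * x⁻¹ * x⁻¹ * g * x * x * x * g * g * x⁻¹ * x⁻¹ * x⁻¹ * x⁻¹) * (x * g * x * g) * (x * g * x⁻¹ * x⁻¹ * g * x * x * x * g * g * x⁻¹ * x⁻¹ * x⁻¹ * x⁻¹)⁻¹ *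
      (x * g * x⁻¹ * x⁻¹ * g * x * x * x * g * x⁻¹) * (x * g * x * g) * (x * g * x⁻¹ * x⁻¹ * g * x * x * x * g * x⁻¹)⁻¹ *
      (x * g * x⁻¹ * x⁻¹ * g * x * x) * (x * g * x * g) * (x * g * x⁻¹ * x⁻¹ * g * x * x)⁻¹ *
      (x * g * x⁻¹ * x⁻¹ * x⁻¹) * (x * g * x * g) * (x * g * x⁻¹ * x⁻¹ * x⁻¹)⁻¹ *
      (x * g * x * g) := by group
    rw [h1, h2, h3] at e
    rw [e]; group
  have e1 : g = (x ^ 3)⁻¹ * (x ^ 3 * g) := by group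
  have e2 : x = (x ^ 3)⁻¹ * x ^ 4 := by group
  rw [hxg, mul_one] at e1
  rw [hx4, mul_one] at e2
  exact e1.trans e2.symm

/-- The group `J = ⟨g, x | g⁴, x⁴ g x⁻³ g²⟩` is finite of order 4, and the images
of `g` and `x` in `J` coincide. -/
theorem stmt_6 :
    Nat.card (PresentedGroup stmt6Rels) = 4 ∧
      (PresentedGroup.of 0 : PresentedGroup stmt6Rels) = PresentedGroup.of 1 := by
  set J := PresentedGroup stmt6Rels
  set g : J := PresentedGroup.of 0 with hgdef
  set x : J := PresentedGroup.of 1 with hxdef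
  have hmem : ∀ r ∈ stmt6Rels, (PresentedGroup.mk stmt6Rels r : J) = 1 := fun r hr =>
    (QuotientGroup.eq_one_iff r).mpr (Subgroup.subset_normalClosure hr)
  have h1 : g ^ 4 = 1 := by
    have := hmem (FreeGroup.of 0 ^ 4) (Or.inl rfl)
    simp only [map_pow] at this; exact this
  have h2 : x ^ 4 * g * x⁻¹ ^ 3 * g ^ 2 = 1 := by
    have := hmem (FreeGroup.of 1 ^ 4 * FreeGroup.of 0 * ((FreeGroup.of 1)⁻¹) ^ 3 *
      FreeGroup.of 0 ^ 2) (Or.inr rfl)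
    simp only [map_pow, map_mul, map_inv] at this; exact this
  obtain ⟨hx4, hgx⟩ := keyLemma g x h1 h2
  refine ⟨?_, hgx⟩
  -- homomorphism to ZMod 4
  have hrels : ∀ r ∈ stmt6Rels,
      FreeGroup.lift (fun _ : Fin 2 => Multiplicative.ofAdd (1 : ZMod 4)) r = 1 := by
    rintro r (rfl | rfl) <;> simp [map_pow, map_mul, map_inv] <;> decide
  set φ := PresentedGroup.toGroup hrels
  have hφx : φ x = Multiplicative.ofAdd (1 : ZMod 4) := PresentedGroup.toGroup.of hrels
  have hord4 : orderOf (Multiplicative.ofAdd (1 : ZMod 4)) = 4 := by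
    rw [orderOf_ofAdd_eq_addOrderOf, ZMod.addOrderOf_one]
  have hdvd1 : orderOf x ∣ 4 := orderOf_dvd_of_pow_eq_one hx4
  have hdvd2 : (4 : ℕ) ∣ orderOf x := by
    rw [← hord4, ← hφx]; exact orderOf_map_dvd φ x
  have hox : orderOf x = 4 := Nat.dvd_antisymm hdvd1 hdvd2
  have htop : Subgroup.zpowers x = ⊤ := by
    rw [eq_top_iff, ← PresentedGroup.closure_range_of stmt6Rels]
    apply (Subgroup.closure_le (Subgroup.zpowers x)).mpr
    rintro _ ⟨i, rfl⟩
    fin_cases i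
    · exact hgx ▸ Subgroup.mem_zpowers x
    · exact Subgroup.mem_zpowers x
  calc Nat.card J = Nat.card (⊤ : Subgroup J) := (Nat.card_congr Subgroup.topEquiv.toEquiv).symm
    _ = Nat.card (Subgroup.zpowers x) := by rw [htop]
    _ = orderOf x := Nat.card_zpowers x
    _ = 4 := hox
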